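/- Fix reals L < U, t > 0 and ε > 0, and set μ = U − L + 2t. Let x_1, x_2 ∈ [L, U] with d_E = |x_1 − x_2| ≤ 2t, and let d_H denote the Hamming distance between the DPBV encodings of x_1 and x_2. Then E[d_H] = 2s · (d_E/μ) · (e^{2ε} + 1)/(e^ε + 1)^2 + ( s − 2s · (d_E/μ) ) · 2e^ε/(e^ε + 1)^2. -/

import Mathlib

open MeasureTheory ProbabilityTheory Real

/-- The BV hash: `h_{r,t}(x) = 1` if `x ∈ [r - t, r + t]` and `0` otherwise. -/
noncomputable def bvHash (t r x : ℝ) : ℕ := if x ∈ Set.Icc (r - t) (r + t) then 1 else 0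

/-- The uniform probability measure on the interval `[a, b]`. -/
noncomputable def uniformIcc (a b : ℝ) : Measure ℝ :=
  (ENNReal.ofReal (b - a))⁻¹ • (volume.restrict (Set.Icc a b))

/-- A DPBV bit: the BV hash bit `bvHash t r x` XOR-ed with the flip indicator `flip ∈ {0,1}`. -/
noncomputable def dpbvBit (t r x flip : ℝ) : ℕ :=
  if flip = 1 then 1 - bvHash t r x else bvHash t r x

/-- The (random) Hamming distance between the DPBV encodings of `x₁` (with flips `f`) and `x₂`
(with flips `g`): the number of coordinates in which they differ. -/
noncomputable def dpbvHammingDist (t : ℝ) {s : ℕ} {Ω : Type*}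
    (r f g : Fin s → Ω → ℝ) (x₁ x₂ : ℝ) (ω : Ω) : ℕ :=
  (Finset.univ.filter fun i =>
    dpbvBit t (r i ω) x₁ (f i ω) ≠ dpbvBit t (r i ω) x₂ (g i ω)).card

lemma bvHash_ne_iff (t x y a : ℝ) :
    bvHash t a x ≠ bvHash t a y ↔ ¬ (x ∈ Set.Icc (a-t) (a+t) ↔ y ∈ Set.Icc (a-t) (a+t)) := by
  by_cases h1 : x ∈ Set.Icc (a-t) (a+t) <;> by_cases h2 : y ∈ Set.Icc (a-t) (a+t) <;>
    simp [bvHash, h1, h2]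

lemma diffSet_eq (t x y : ℝ) (hxy : x ≤ y) (hd : y - x ≤ 2*t) :
    {a : ℝ | bvHash t a x ≠ bvHash t a y}
      = Set.Ico (x-t) (y-t) ∪ Set.Ioc (x+t) (y+t) := by
  ext a
  simp only [Set.mem_setOf_eq, bvHash_ne_iff, Set.mem_Icc, Set.mem_union, Set.mem_Ico,
    Set.mem_Ioc]
  constructor
  · intro h
    by_cases h1 : a - t ≤ x ∧ x ≤ a + t
    · by_cases h2 : a < y - t
      · exact Or.inl ⟨by linarith [h1.2], h2⟩
      · push_neg at h2
        exact absurd (iff_of_true h1 ⟨by linarith [h1.1], by linarith⟩) h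
    · by_cases h2 : a - t ≤ y ∧ y ≤ a + t
      · push_neg at h1
        by_cases h3 : x + t < a
        · exact Or.inr ⟨h3, by linarith [h2.1]⟩
        · push_neg at h3
          have := h1 (by linarith); linarith [h2.2]
      · exact absurd (iff_of_false h1 h2) h
  · rintro (⟨h1, h2⟩ | ⟨h1, h2⟩) hiff
    · have h3 := hiff.mp ⟨by linarith, by linarith⟩
      linarith [h3.2]
    · have h3 := hiff.mpr ⟨by linarith, by linarith⟩
      linarith [h3.1]

lemma bit_ne_iff (t a x₁ x₂ φ γ : ℝ) (hφ : φ = 0 ∨ φ = 1) (hγ : γ = 0 ∨ γ = 1) :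
    dpbvBit t a x₁ φ ≠ dpbvBit t a x₂ γ ↔
      ((bvHash t a x₁ ≠ bvHash t a x₂) ∧ ¬((φ = 1 ∧ ¬ γ = 1) ∨ (¬ φ = 1 ∧ γ = 1))
        ∨ ¬(bvHash t a x₁ ≠ bvHash t a x₂) ∧ ((φ = 1 ∧ ¬ γ = 1) ∨ (¬ φ = 1 ∧ γ = 1))) := by
  rcases hφ with hφ | hφ <;> rcases hγ with hγ | hγ <;> subst hφ <;> subst hγ <;>
    by_cases h1 : x₁ ∈ Set.Icc (a-t) (a+t) <;> by_cases h2 : x₂ ∈ Set.Icc (a-t) (a+t) <;>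
    simp [dpbvBit, bvHash, h1, h2]

lemma measure_diffSet (L U t : ℝ) (hLU : L < U) (ht : 0 < t) (x y : ℝ)
    (hx : x ∈ Set.Icc L U) (hy : y ∈ Set.Icc L U) (hxy : x ≤ y) (hd : y - x ≤ 2*t) :
    uniformIcc (L-t) (U+t) {a : ℝ | bvHash t a x ≠ bvHash t a y}
      = ENNReal.ofReal (2*(y-x) / (U - L + 2*t)) := by
  have hS := diffSet_eq t x y hxy hd
  have hmeas : MeasurableSet {a : ℝ | bvHash t a x ≠ bvHash t a y} := by
    rw [hS]; exact measurableSet_Ico.union measurableSet_Ioc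
  rw [uniformIcc, Measure.smul_apply, Measure.restrict_apply hmeas, hS]
  have hsub : (Set.Ico (x-t) (y-t) ∪ Set.Ioc (x+t) (y+t)) ∩ Set.Icc (L-t) (U+t)
      = Set.Ico (x-t) (y-t) ∪ Set.Ioc (x+t) (y+t) := by
    apply Set.inter_eq_left.mpr
    rintro a (⟨h1, h2⟩ | ⟨h1, h2⟩) <;>
      exact ⟨by linarith [hx.1, hy.1], by linarith [hx.2, hy.2]⟩
  have hdisj : Disjoint (Set.Ico (x-t) (y-t)) (Set.Ioc (x+t) (y+t)) := by
    apply Set.disjoint_left.mpr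
    rintro a ⟨h1, h2⟩ ⟨h3, h4⟩; linarith
  rw [hsub, measure_union hdisj measurableSet_Ioc, Real.volume_Ico, Real.volume_Ioc,
    show y - t - (x - t) = y - x by ring, show y + t - (x + t) = y - x by ring,
    ← ENNReal.ofReal_add (by linarith) (by linarith),
    show y - x + (y - x) = 2*(y-x) by ring, smul_eq_mul, ← ENNReal.div_eq_inv_mul,
    show U + t - (L - t) = U - L + 2*t by ring,
    ← ENNReal.ofReal_div_of_pos (by linarith)]

lemma measure_diffSet' (L U t : ℝ) (hLU : L < U) (ht : 0 < t) (x y : ℝ)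
    (hx : x ∈ Set.Icc L U) (hy : y ∈ Set.Icc L U) (hd : |x - y| ≤ 2*t) :
    MeasurableSet {a : ℝ | bvHash t a x ≠ bvHash t a y} ∧
    uniformIcc (L-t) (U+t) {a : ℝ | bvHash t a x ≠ bvHash t a y}
      = ENNReal.ofReal (2*|x - y| / (U - L + 2*t)) := by
  rcases le_total x y with hxy | hxy
  · have habs : |x - y| = y - x := by rw [abs_sub_comm]; exact abs_of_nonneg (by linarith)
    have h2 : y - x ≤ 2*t := habs ▸ hd
    constructor
    · rw [diffSet_eq t x y hxy h2]; exact measurableSet_Ico.union measurableSet_Ioc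
    · rw [habs]; exact measure_diffSet L U t hLU ht x y hx hy hxy h2
  · have hset : {a : ℝ | bvHash t a x ≠ bvHash t a y}
        = {a : ℝ | bvHash t a y ≠ bvHash t a x} := by ext a; simp [ne_comm]
    have habs : |x - y| = x - y := abs_of_nonneg (by linarith)
    have h2 : x - y ≤ 2*t := habs ▸ hd
    constructor
    · rw [hset, diffSet_eq t y x hxy h2]; exact measurableSet_Ico.union measurableSet_Ioc
    · rw [hset, habs]; exact measure_diffSet L U t hLU ht y x hy hx hxy h2

/-- For `L < U`, `t > 0`, `ε > 0`, `μ = U - L + 2t`, with `r 0, …, r (s-1)` i.i.d. uniform on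
`[L - t, U + t]`, flip indicators `f i, g i ∈ {0,1}` each equal to `1` with probability
`1/(e^ε + 1)`, all mutually independent, and `x₁, x₂ ∈ [L, U]` with `d_E = |x₁ - x₂| ≤ 2t`,
the Hamming distance `d_H` between the DPBV encodings of `x₁` and `x₂` satisfies
`E[d_H] = 2s·(d_E/μ)·(e^{2ε} + 1)/(e^ε + 1)² + (s − 2s·(d_E/μ))·2e^ε/(e^ε + 1)²`. -/
theorem dpbv_expected_hamming_distance
    {Ω : Type*} [MeasurableSpace Ω] (P : Measure Ω) [IsProbabilityMeasure P]
    (L U t μ ε : ℝ) (hLU : L < U) (ht : 0 < t) (hε : 0 < ε) (hμ : μ = U - L + 2 * t)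
    (s : ℕ) (hs : 1 ≤ s) (r f g : Fin s → Ω → ℝ)
    (hr : ∀ i, Measurable (r i)) (hf : ∀ i, Measurable (f i)) (hg : ∀ i, Measurable (g i))
    (hrlaw : ∀ i, Measure.map (r i) P = uniformIcc (L - t) (U + t))
    (hf01 : ∀ i ω, f i ω = 0 ∨ f i ω = 1) (hg01 : ∀ i ω, g i ω = 0 ∨ g i ω = 1)
    (hflaw : ∀ i, P {ω | f i ω = 1} = ENNReal.ofReal (1 / (exp ε + 1)))
    (hglaw : ∀ i, P {ω | g i ω = 1} = ENNReal.ofReal (1 / (exp ε + 1)))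
    (hindep : iIndepFun (Sum.elim r (Sum.elim f g)) P)
    (x₁ x₂ : ℝ) (hx₁ : x₁ ∈ Set.Icc L U) (hx₂ : x₂ ∈ Set.Icc L U)
    (hd : |x₁ - x₂| ≤ 2 * t) :
    ∫ ω, (dpbvHammingDist t r f g x₁ x₂ ω : ℝ) ∂P
      = 2 * s * (|x₁ - x₂| / μ) * (exp (2 * ε) + 1) / (exp ε + 1) ^ 2
        + (s - 2 * s * (|x₁ - x₂| / μ)) * (2 * exp ε) / (exp ε + 1) ^ 2 := by
  classical
  have hexp : (0:ℝ) < exp ε := exp_pos ε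
  have hμpos : 0 < μ := by rw [hμ]; linarith
  set d : ℝ := |x₁ - x₂| with hdd
  have hd0 : 0 ≤ d := abs_nonneg _
  have hdU : d ≤ U - L := by
    rw [hdd, abs_sub_le_iff]
    exact ⟨by linarith [hx₁.2, hx₂.1], by linarith [hx₂.2, hx₁.1]⟩
  set q : ℝ := 1 / (exp ε + 1) with hq
  have hq0 : 0 < q := by positivity
  have hq1 : q < 1 := by rw [hq, div_lt_one (by linarith)]; linarith
  set p : ℝ := 2 * d / μ with hp
  have hp0 : 0 ≤ p := by positivity
  have hp1 : p ≤ 1 := by rw [hp, div_le_one hμpos, hμ]; linarith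
  set q' : ℝ := 2 * q * (1 - q) with hq'
  have hq'0 : 0 ≤ q' := by nlinarith
  have hq'1 : q' ≤ 1 := by nlinarith [sq_nonneg (1 - 2*q)]
  set S : Set ℝ := {a : ℝ | bvHash t a x₁ ≠ bvHash t a x₂} with hSdef
  have hSm : MeasurableSet S ∧ uniformIcc (L - t) (U + t) S = ENNReal.ofReal p := by
    have h := measure_diffSet' L U t hLU ht x₁ x₂ hx₁ hx₂ hd
    refine ⟨h.1, ?_⟩
    rw [h.2, hp, hμ]
  set T : Set (ℝ × ℝ) := ({1} ×ˢ ({1}ᶜ : Set ℝ)) ∪ (({1}ᶜ : Set ℝ) ×ˢ {1}) with hT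
  have hTm : MeasurableSet T :=
    ((measurableSet_singleton 1).prod (measurableSet_singleton 1).compl).union
      ((measurableSet_singleton 1).compl.prod (measurableSet_singleton 1))
  have hmeasall : ∀ j, Measurable (Sum.elim r (Sum.elim f g) j) := by
    rintro (j | j | j)
    · exact hr j
    · exact hf j
    · exact hg j
  set A : Fin s → Set Ω := fun i =>
    {ω | dpbvBit t (r i ω) x₁ (f i ω) ≠ dpbvBit t (r i ω) x₂ (g i ω)} with hAdef
  have key : ∀ i : Fin s, MeasurableSet (A i) ∧
      P (A i) = ENNReal.ofReal (p * (1 - q') + (1 - p) * q') := by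
    intro i
    set pair : Ω → ℝ × ℝ := fun ω => (f i ω, g i ω) with hpair
    have hpairm : Measurable pair := (hf i).prodMk (hg i)
    set H : Set Ω := r i ⁻¹' S with hH
    set E : Set Ω := pair ⁻¹' T with hE
    have hHm : MeasurableSet H := hr i hSm.1
    have hEm : MeasurableSet E := hpairm hTm
    have hPH : P H = ENNReal.ofReal p := by
      rw [hH, ← Measure.map_apply (hr i) hSm.1, hrlaw i, hSm.2]
    have hfg : IndepFun (f i) (g i) P :=
      hindep.indepFun (show (Sum.inr (Sum.inl i) : Fin s ⊕ (Fin s ⊕ Fin s))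
        ≠ Sum.inr (Sum.inr i) by simp)
    have hPf : P (f i ⁻¹' {1}) = ENNReal.ofReal q := by
      have he : f i ⁻¹' {1} = {ω | f i ω = 1} := by ext ω; simp
      rw [he, hflaw i, hq]
    have hPg : P (g i ⁻¹' {1}) = ENNReal.ofReal q := by
      have he : g i ⁻¹' {1} = {ω | g i ω = 1} := by ext ω; simp
      rw [he, hglaw i, hq]
    have hPfc : P (f i ⁻¹' ({1}ᶜ)) = ENNReal.ofReal (1 - q) := by
      rw [Set.preimage_compl, prob_compl_eq_one_sub (hf i (measurableSet_singleton 1)), hPf,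
        ← ENNReal.ofReal_one, ← ENNReal.ofReal_sub _ (le_of_lt hq0)]
    have hPgc : P (g i ⁻¹' ({1}ᶜ)) = ENNReal.ofReal (1 - q) := by
      rw [Set.preimage_compl, prob_compl_eq_one_sub (hg i (measurableSet_singleton 1)), hPg,
        ← ENNReal.ofReal_one, ← ENNReal.ofReal_sub _ (le_of_lt hq0)]
    have hPE : P E = ENNReal.ofReal q' := by
      have hEeq : E = (f i ⁻¹' {1} ∩ g i ⁻¹' ({1}ᶜ)) ∪ (f i ⁻¹' ({1}ᶜ) ∩ g i ⁻¹' {1}) := by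
        rw [hE, hT, Set.preimage_union, Set.mk_preimage_prod, Set.mk_preimage_prod]
      have hdisj : Disjoint (f i ⁻¹' {1} ∩ g i ⁻¹' ({1}ᶜ)) (f i ⁻¹' ({1}ᶜ) ∩ g i ⁻¹' {1}) := by
        apply Set.disjoint_left.mpr
        rintro ω ⟨h1, _⟩ ⟨h2, _⟩; exact h2 h1
      rw [hEeq, measure_union hdisj (((hf i) (measurableSet_singleton 1).compl).inter
          ((hg i) (measurableSet_singleton 1))),
        hfg.measure_inter_preimage_eq_mul _ _ (measurableSet_singleton 1)
          (measurableSet_singleton 1).compl,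
        hfg.measure_inter_preimage_eq_mul _ _ (measurableSet_singleton 1).compl
          (measurableSet_singleton 1),
        hPf, hPg, hPfc, hPgc, ← ENNReal.ofReal_mul (le_of_lt hq0),
        ← ENNReal.ofReal_mul (by linarith : (0:ℝ) ≤ 1 - q),
        ← ENNReal.ofReal_add (by nlinarith) (by nlinarith), hq']
      congr 1; ring
    have hPEc : P Eᶜ = ENNReal.ofReal (1 - q') := by
      rw [prob_compl_eq_one_sub hEm, hPE, ← ENNReal.ofReal_one,
        ← ENNReal.ofReal_sub _ hq'0]
    have hPHc : P Hᶜ = ENNReal.ofReal (1 - p) := by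
      rw [prob_compl_eq_one_sub hHm, hPH, ← ENNReal.ofReal_one,
        ← ENNReal.ofReal_sub _ hp0]
    have hA : A i = (H ∩ Eᶜ) ∪ (Hᶜ ∩ E) := by
      ext ω
      have hiff := bit_ne_iff t (r i ω) x₁ x₂ (f i ω) (g i ω) (hf01 i ω) (hg01 i ω)
      simp only [hAdef, Set.mem_setOf_eq, Set.mem_union, Set.mem_inter_iff,
        Set.mem_compl_iff, hH, hE, Set.mem_preimage, hT, Set.mem_union, Set.mem_prod,
        Set.mem_singleton_iff, Set.mem_compl_iff, hpair, hSdef] at hiff ⊢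
      tauto
    have hindepRpair : IndepFun (r i) pair P :=
      (hindep.indepFun_prodMk hmeasall (Sum.inr (Sum.inl i)) (Sum.inr (Sum.inr i))
        (Sum.inl i) (by simp) (by simp)).symm
    have hdisjHE : Disjoint (H ∩ Eᶜ) (Hᶜ ∩ E) := by
      apply Set.disjoint_left.mpr
      rintro ω ⟨h1, _⟩ ⟨h2, _⟩; exact h2 h1
    refine ⟨?_, ?_⟩
    · rw [hA]; exact (hHm.inter hEm.compl).union (hHm.compl.inter hEm)
    · rw [hA, measure_union hdisjHE (hHm.compl.inter hEm),
        show H ∩ Eᶜ = r i ⁻¹' S ∩ pair ⁻¹' (Tᶜ) by rw [hH, hE, Set.preimage_compl],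
        show Hᶜ ∩ E = r i ⁻¹' (Sᶜ) ∩ pair ⁻¹' T by rw [hH, hE, Set.preimage_compl],
        hindepRpair.measure_inter_preimage_eq_mul _ _ hSm.1 hTm.compl,
        hindepRpair.measure_inter_preimage_eq_mul _ _ hSm.1.compl hTm,
        show r i ⁻¹' S = H from hH.symm,
        show pair ⁻¹' (Tᶜ) = Eᶜ by rw [hE, Set.preimage_compl],
        show r i ⁻¹' (Sᶜ) = Hᶜ by rw [hH, Set.preimage_compl],
        show pair ⁻¹' T = E from hE.symm,
        hPH, hPEc, hPHc, hPE, ← ENNReal.ofReal_mul hp0,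
        ← ENNReal.ofReal_mul (by linarith : (0:ℝ) ≤ 1 - p),
        ← ENNReal.ofReal_add (mul_nonneg hp0 (by linarith))
          (mul_nonneg (by linarith) hq'0)]
  have hcount : ∀ ω, (dpbvHammingDist t r f g x₁ x₂ ω : ℝ)
      = ∑ i : Fin s, (A i).indicator (fun _ => (1:ℝ)) ω := by
    intro ω
    rw [dpbvHammingDist, Finset.card_filter]
    push_cast
    refine Finset.sum_congr rfl fun i _ => ?_
    simp only [hAdef, Set.indicator_apply, Set.mem_setOf_eq]
  have hint : ∫ ω, (dpbvHammingDist t r f g x₁ x₂ ω : ℝ) ∂P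
      = ∑ i : Fin s, (P (A i)).toReal := by
    simp_rw [hcount]
    rw [integral_finset_sum _ (fun i _ => (integrable_const (1:ℝ)).indicator (key i).1)]
    refine Finset.sum_congr rfl fun i _ => ?_
    rw [integral_indicator_const (1:ℝ) (key i).1, smul_eq_mul, mul_one, measureReal_def]
  rw [hint]
  have hterm : ∀ i : Fin s, (P (A i)).toReal = p * (1 - q') + (1 - p) * q' := by
    intro i
    rw [(key i).2, ENNReal.toReal_ofReal
      (by nlinarith : (0:ℝ) ≤ p * (1 - q') + (1 - p) * q')]
  rw [Finset.sum_congr rfl fun i _ => hterm i, Finset.sum_const, Finset.card_univ,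
    Fintype.card_fin, nsmul_eq_mul]
  have hne : exp ε + 1 ≠ 0 := by positivity
  have hμne : μ ≠ 0 := ne_of_gt hμpos
  rw [hp, hq', hq, two_mul ε, exp_add]
  field_simp
  ring
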